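/- Let M be a k×k real matrix with all entries strictly positive. Then M has a positive real eigenvalue λ such that every other complex eigenvalue μ of M satisfies |μ| < λ. -/

import Mathlib

open Matrix Finset

lemma re_eq_abs_imp {z : ℂ} (h : z.re = ‖z‖) : z = (z.re : ℂ) := by
  have h2 : ‖z‖ ^ 2 = z.re ^ 2 + z.im ^ 2 := by
    rw [Complex.sq_norm, Complex.normSq_apply]; ring
  have h3 : z.re ^ 2 = ‖z‖ ^ 2 := by rw [h]
  have h4 : z.im ^ 2 = 0 := by linarith
  have him : z.im = 0 := by
    have := sq_eq_zero_iff.mp h4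
    exact this
  exact Complex.ext (by simp) (by simp [him])

lemma mulVec_map_ofReal {k : ℕ} (M : Matrix (Fin k) (Fin k) ℝ) (v : Fin k → ℝ) :
    (M.map Complex.ofReal).mulVec (fun i => (v i : ℂ)) = fun i => ((M.mulVec v i : ℝ) : ℂ) := by
  funext i
  show ∑ j, (M i j : ℂ) * (v j : ℂ) = ((∑ j, M i j * v j : ℝ) : ℂ)
  push_cast
  rfl
open Matrix
lemma spec_iff {k : ℕ} (A : Matrix (Fin k) (Fin k) ℂ) (μ : ℂ) :
    μ ∈ spectrum ℂ A ↔ ∃ v ≠ 0, A.mulVec v = μ • v := by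
  rw [spectrum.mem_iff]
  rw [Matrix.isUnit_iff_isUnit_det, isUnit_iff_ne_zero, not_ne_iff,
    ← Matrix.exists_mulVec_eq_zero_iff]
  constructor
  · rintro ⟨v, hv, h⟩
    refine ⟨v, hv, ?_⟩
    have : (algebraMap ℂ (Matrix (Fin k) (Fin k) ℂ)) μ = μ • 1 := by
      simp [Algebra.algebraMap_eq_smul_one]
    rw [this, Matrix.sub_mulVec, Matrix.smul_mulVec, Matrix.one_mulVec, sub_eq_zero] at h
    exact h.symm
  · rintro ⟨v, hv, h⟩
    refine ⟨v, hv, ?_⟩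
    have : (algebraMap ℂ (Matrix (Fin k) (Fin k) ℂ)) μ = μ • 1 := by
      simp [Algebra.algebraMap_eq_smul_one]
    rw [this, Matrix.sub_mulVec, Matrix.smul_mulVec, Matrix.one_mulVec, h, sub_self]

variable {k : ℕ}

lemma mulVec_pos (hk : 0 < k) (M : Matrix (Fin k) (Fin k) ℝ)
    (hM : ∀ i j, 0 < M i j) {a : Fin k → ℝ} (ha : ∀ i, 0 ≤ a i) (ha0 : a ≠ 0) :
    ∀ i, 0 < M.mulVec a i := by
  intro i
  obtain ⟨j, hj⟩ : ∃ j, a j ≠ 0 := by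
    by_contra h; push_neg at h; exact ha0 (funext h)
  have hj' : 0 < a j := lt_of_le_of_ne (ha j) (Ne.symm hj)
  have : M.mulVec a i = ∑ j, M i j * a j := rfl
  rw [this]
  exact Finset.sum_pos' (fun j _ => mul_nonneg (hM i j).le (ha j))
    ⟨j, Finset.mem_univ j, mul_pos (hM i j) hj'⟩

/-- The Collatz–Wielandt maximum. -/
lemma exists_pf_pair (hk : 0 < k) (M : Matrix (Fin k) (Fin k) ℝ)
    (hM : ∀ i j, 0 < M i j) :
    ∃ lam : ℝ, 0 < lam ∧
      (∀ (t : ℝ) (a : Fin k → ℝ), (∀ i, 0 ≤ a i) → a ≠ 0 →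
        (∀ i, t * a i ≤ M.mulVec a i) → t ≤ lam) ∧
      (∀ a : Fin k → ℝ, (∀ i, 0 ≤ a i) → a ≠ 0 →
        (∀ i, lam * a i ≤ M.mulVec a i) → M.mulVec a = lam • a) ∧
      (∃ x : Fin k → ℝ, (∀ i, 0 ≤ x i) ∧ x ≠ 0 ∧ M.mulVec x = lam • x) := by
  set B : ℝ := ∑ i, ∑ j, M i j with hB
  set T : Set (ℝ × (Fin k → ℝ)) :=
    {p | 0 ≤ p.1 ∧ (∀ i, 0 ≤ p.2 i) ∧ (∑ i, p.2 i) = 1 ∧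
      ∀ i, p.1 * p.2 i ≤ M.mulVec p.2 i} with hT
  -- normalization lemma
  have hnorm : ∀ (t : ℝ) (a : Fin k → ℝ), 0 ≤ t → (∀ i, 0 ≤ a i) → a ≠ 0 →
      (∀ i, t * a i ≤ M.mulVec a i) → ((t, (∑ i, a i)⁻¹ • a) ∈ T) := by
    intro t a ht ha ha0 hle
    obtain ⟨j, hj⟩ : ∃ j, a j ≠ 0 := by
      by_contra h; push_neg at h; exact ha0 (funext h)
    have hs : 0 < ∑ i, a i :=
      Finset.sum_pos' (fun i _ => ha i)
        ⟨j, Finset.mem_univ j, lt_of_le_of_ne (ha j) (Ne.symm hj)⟩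
    refine ⟨ht, fun i => mul_nonneg (inv_nonneg.2 hs.le) (ha i), ?_, fun i => ?_⟩
    · simp only [Pi.smul_apply, smul_eq_mul, ← Finset.mul_sum]
      field_simp
    · have : M.mulVec ((∑ i, a i)⁻¹ • a) = (∑ i, a i)⁻¹ • M.mulVec a :=
        M.mulVec_smul _ a
      rw [this]
      simp only [Pi.smul_apply, smul_eq_mul]
      rw [mul_left_comm]
      exact mul_le_mul_of_nonneg_left (hle i) (inv_nonneg.2 hs.le)
  -- T is compact
  have hTsub : T ⊆ Set.Icc ((0 : ℝ), (0 : Fin k → ℝ)) (B, fun _ => (1:ℝ)) := by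
    rintro ⟨t, x⟩ ⟨ht, hx, hsum, hle⟩
    have hx1 : ∀ j, x j ≤ 1 := by
      intro j
      calc x j ≤ ∑ i, x i :=
            Finset.single_le_sum (fun i _ => hx i) (Finset.mem_univ j)
        _ = 1 := hsum
    constructor
    · exact ⟨ht, fun i => hx i⟩
    · constructor
      · calc t = t * ∑ i, x i := by rw [hsum, mul_one]
          _ = ∑ i, t * x i := by rw [Finset.mul_sum]
          _ ≤ ∑ i, M.mulVec x i := Finset.sum_le_sum fun i _ => hle i
          _ = ∑ i, ∑ j, M i j * x j := rfl
          _ ≤ ∑ i, ∑ j, M i j := by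
              refine Finset.sum_le_sum fun i _ => Finset.sum_le_sum fun j _ => ?_
              calc M i j * x j ≤ M i j * 1 :=
                    mul_le_mul_of_nonneg_left (hx1 j) (hM i j).le
                _ = M i j := mul_one _
      · exact fun j => hx1 j
  have hTclosed : IsClosed T := by
    have c1 : IsClosed {p : ℝ × (Fin k → ℝ) | 0 ≤ p.1} :=
      isClosed_le continuous_const continuous_fst
    have c2 : IsClosed {p : ℝ × (Fin k → ℝ) | ∀ i, 0 ≤ p.2 i} := by
      rw [Set.setOf_forall]
      exact isClosed_iInter fun i =>
        isClosed_le continuous_const ((continuous_apply i).comp continuous_snd)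
    have c3 : IsClosed {p : ℝ × (Fin k → ℝ) | (∑ i, p.2 i) = 1} := by
      refine isClosed_eq ?_ continuous_const
      exact continuous_finset_sum _ fun i _ => (continuous_apply i).comp continuous_snd
    have c4 : IsClosed {p : ℝ × (Fin k → ℝ) | ∀ i, p.1 * p.2 i ≤ M.mulVec p.2 i} := by
      rw [Set.setOf_forall]
      refine isClosed_iInter fun i => isClosed_le ?_ ?_
      · exact continuous_fst.mul ((continuous_apply i).comp continuous_snd)
      · have : (fun p : ℝ × (Fin k → ℝ) => M.mulVec p.2 i)
            = fun p => ∑ j, M i j * p.2 j := rfl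
        rw [this]
        exact continuous_finset_sum _ fun j _ =>
          continuous_const.mul ((continuous_apply j).comp continuous_snd)
    have : T = {p : ℝ × (Fin k → ℝ) | 0 ≤ p.1} ∩ {p | ∀ i, 0 ≤ p.2 i}
        ∩ {p | (∑ i, p.2 i) = 1} ∩ {p | ∀ i, p.1 * p.2 i ≤ M.mulVec p.2 i} := by
      ext p; simp only [hT, Set.mem_setOf_eq, Set.mem_inter_iff]; tauto
    rw [this]
    exact ((c1.inter c2).inter c3).inter c4
  have hTcompact : IsCompact T := IsCompact.of_isClosed_subset isCompact_Icc hTclosed hTsub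
  -- T is nonempty, with positive first coordinate witness
  have hu : ∀ i, (0:ℝ) ≤ (fun _ : Fin k => (k:ℝ)⁻¹) i := fun i =>
    inv_nonneg.2 (Nat.cast_nonneg k)
  have hu0 : (fun _ : Fin k => (k:ℝ)⁻¹) ≠ 0 := by
    intro h
    have := congrFun h ⟨0, hk⟩
    simp at this
    omega
  set i0 : Fin k := ⟨0, hk⟩
  set t0 : ℝ := Finset.inf' Finset.univ (⟨i0, Finset.mem_univ i0⟩ : Finset.univ.Nonempty)
    (fun i => M.mulVec (fun _ => (k:ℝ)⁻¹) i) with ht0def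
  have ht0pos : 0 < t0 := by
    rw [ht0def]; apply (Finset.lt_inf'_iff _).mpr
    exact fun i _ => mulVec_pos hk M hM hu hu0 i
  have ht0mem : (t0, (fun _ : Fin k => (k:ℝ)⁻¹)) ∈ T := by
    refine ⟨ht0pos.le, hu, ?_, fun i => ?_⟩
    · simp
      field_simp
    · have h1 : t0 ≤ M.mulVec (fun _ => (k:ℝ)⁻¹) i :=
        Finset.inf'_le _ (Finset.mem_univ i)
      have h2 : t0 * (k:ℝ)⁻¹ ≤ t0 * 1 := by
        refine mul_le_mul_of_nonneg_left ?_ ht0pos.le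
        rw [inv_le_one_iff₀]
        right
        exact_mod_cast hk
      calc t0 * (k:ℝ)⁻¹ ≤ t0 * 1 := h2
        _ = t0 := mul_one _
        _ ≤ _ := h1
  -- get the maximum
  obtain ⟨⟨lam, x⟩, hmemT, hmax⟩ :=
    hTcompact.exists_isMaxOn ⟨_, ht0mem⟩ continuous_fst.continuousOn
  obtain ⟨hlam0, hx, hxsum, hxle⟩ := hmemT
  have hlampos : 0 < t0 := ht0pos
  have hlam : 0 < lam := lt_of_lt_of_le ht0pos (hmax ht0mem)
  -- maximality over all (t, a)
  have hmax' : ∀ (t : ℝ) (a : Fin k → ℝ), (∀ i, 0 ≤ a i) → a ≠ 0 →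
      (∀ i, t * a i ≤ M.mulVec a i) → t ≤ lam := by
    intro t a ha ha0 hle
    rcases le_or_gt t 0 with ht | ht
    · exact ht.trans hlam.le
    · exact hmax (hnorm t a ht.le ha ha0 hle)
  have hxne : x ≠ 0 := by
    intro h
    rw [h] at hxsum
    simp at hxsum
  suffices heq : ∀ a : Fin k → ℝ, (∀ i, 0 ≤ a i) → a ≠ 0 →
      (∀ i, lam * a i ≤ M.mulVec a i) → M.mulVec a = lam • a by
    exact ⟨lam, hlam, hmax', heq, x, hx, hxne, heq x hx hxne hxle⟩
  intro a ha ha0 hle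
  by_contra hne
  set b : Fin k → ℝ := M.mulVec a with hb
  have hbpos : ∀ i, 0 < b i := mulVec_pos hk M hM ha ha0
  have hd : ∀ i, 0 ≤ b i - lam * a i := fun i => sub_nonneg.2 (hle i)
  have hd0 : (fun i => b i - lam * a i) ≠ 0 := by
    intro h
    apply hne
    funext i
    have := congrFun h i
    simp only [Pi.zero_apply] at this
    have : b i = lam * a i := by linarith
    simpa [hb] using this
  have hc : ∀ i, 0 < M.mulVec (fun i => b i - lam * a i) i :=
    mulVec_pos hk M hM hd hd0
  have hMb : ∀ i, lam * b i < M.mulVec b i := by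
    intro i
    have h1 : M.mulVec (fun i => b i - lam * a i) i
        = M.mulVec b i - lam * M.mulVec a i := by
      have : (fun i => b i - lam * a i) = b - lam • a := by
        funext i; simp
      rw [this, Matrix.mulVec_sub, M.mulVec_smul]
      simp
    have := hc i
    rw [h1] at this
    rw [hb]
    linarith
  set t' : ℝ := Finset.inf' Finset.univ (⟨i0, Finset.mem_univ i0⟩ : Finset.univ.Nonempty)
    (fun i => M.mulVec b i / b i) with ht'
  have ht'gt : lam < t' := by
    rw [ht']; apply (Finset.lt_inf'_iff _).mpr
    intro i _
    rw [lt_div_iff₀ (hbpos i)]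
    rw [mul_comm]
    exact (mul_comm (b i) lam ▸ hMb i)
  have ht'le : ∀ i, t' * b i ≤ M.mulVec b i := by
    intro i
    have h1 : t' ≤ M.mulVec b i / b i := Finset.inf'_le _ (Finset.mem_univ i)
    rw [le_div_iff₀ (hbpos i)] at h1
    exact h1
  have hb0 : b ≠ 0 := by
    intro h
    have := congrFun h i0
    simp only [Pi.zero_apply] at this
    exact absurd this (hbpos i0).ne'
  have := hmax' t' b (fun i => (hbpos i).le) hb0 ht'le
  linarith

/-- Perron-Frobenius: a positive real square matrix has a positive real eigenvalue
strictly dominating all other complex eigenvalues in absolute value. -/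
theorem perron_frobenius_dominant_eigenvalue
    {k : ℕ} (hk : 0 < k) (M : Matrix (Fin k) (Fin k) ℝ)
    (hM : ∀ i j, 0 < M i j) :
    ∃ lam : ℝ, 0 < lam ∧ (lam : ℂ) ∈ spectrum ℂ (M.map Complex.ofReal) ∧
      ∀ μ ∈ spectrum ℂ (M.map Complex.ofReal), μ ≠ (lam : ℂ) →
        ‖μ‖ < lam := by
  obtain ⟨lam, hlam, hmax, heqprop, x, hx, hx0, hxeig⟩ := exists_pf_pair hk M hM
  set A := M.map Complex.ofReal with hA
  set i0 : Fin k := ⟨0, hk⟩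
  refine ⟨lam, hlam, ?_, ?_⟩
  · rw [spec_iff]
    refine ⟨fun i => (x i : ℂ), ?_, ?_⟩
    · intro h
      apply hx0
      funext i
      have := congrFun h i
      simpa using this
    · rw [mulVec_map_ofReal, hxeig]
      funext i
      simp
  · intro μ hμ hne
    rw [spec_iff] at hμ
    obtain ⟨y, hy0, hy⟩ := hμ
    set a : Fin k → ℝ := fun i => ‖y i‖ with ha
    have hanneg : ∀ i, 0 ≤ a i := fun i => norm_nonneg _
    have ha0 : a ≠ 0 := by
      intro h
      apply hy0
      funext i
      have := congrFun h i
      simpa [ha, map_eq_zero] using this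
    have key : ∀ i, ‖μ‖ * a i ≤ M.mulVec a i := by
      intro i
      have h1 : (A.mulVec y) i = μ * y i := by rw [hy]; rfl
      have h2 : ‖(A.mulVec y) i‖ = ‖μ‖ * a i := by
        rw [h1, norm_mul]
      rw [← h2]
      have h3 : (A.mulVec y) i = ∑ j, (M i j : ℂ) * y j := rfl
      rw [h3]
      calc ‖∑ j, (M i j : ℂ) * y j‖
          ≤ ∑ j, ‖(M i j : ℂ) * y j‖ := norm_sum_le _ _
        _ = ∑ j, M i j * a j := by
            refine Finset.sum_congr rfl fun j _ => ?_
            rw [norm_mul, Complex.norm_real, Real.norm_eq_abs, abs_of_pos (hM i j)]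
        _ = M.mulVec a i := rfl
    have hle : ‖μ‖ ≤ lam := hmax _ a hanneg ha0 key
    rcases lt_or_eq_of_le hle with h | h
    · exact h
    exfalso
    -- equality case
    have key' : ∀ i, lam * a i ≤ M.mulVec a i := by
      intro i; rw [← h]; exact key i
    have haeq : M.mulVec a = lam • a := heqprop a hanneg ha0 key'
    have hapos : ∀ i, 0 < a i := by
      intro i
      have h1 := mulVec_pos hk M hM hanneg ha0 i
      rw [haeq] at h1
      have h2 : (0:ℝ) < lam * a i := h1
      nlinarith
    -- triangle inequality equality at row i0
    set z : Fin k → ℂ := fun j => (M i0 j : ℂ) * y j with hz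
    set S : ℂ := ∑ j, z j with hS
    have hSval : S = μ * y i0 := by
      rw [hS]
      have h1 : (A.mulVec y) i0 = μ * y i0 := by rw [hy]; rfl
      rw [← h1]; rfl
    have habs : ‖S‖ = ∑ j, ‖z j‖ := by
      have h1 : ‖S‖ = lam * a i0 := by
        rw [hSval, norm_mul, h]
      have h2 : ∑ j, ‖z j‖ = ∑ j, M i0 j * a j := by
        refine Finset.sum_congr rfl fun j _ => ?_
        show ‖(M i0 j : ℂ) * y j‖ = M i0 j * a j
        rw [norm_mul, Complex.norm_real, Real.norm_eq_abs, abs_of_pos (hM i0 j)]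
      have h3 : (∑ j, M i0 j * a j) = (M.mulVec a) i0 := rfl
      rw [h1, h2, h3, haeq]
      rfl
    have hSpos : 0 < ‖S‖ := by
      have : ‖S‖ = lam * a i0 := by
        rw [hSval, norm_mul, h]
      rw [this]
      exact mul_pos hlam (hapos i0)
    have hSne : S ≠ 0 := by
      intro hcon
      rw [hcon] at hSpos
      simp at hSpos
    set u : ℂ := (starRingEnd ℂ) S / (‖S‖ : ℂ) with hu
    have huabs : ‖u‖ = 1 := by
      rw [hu, norm_div, Complex.norm_conj, Complex.norm_real, Real.norm_eq_abs,
        abs_of_pos hSpos, div_self hSpos.ne']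
    have hcs : ((‖S‖ : ℝ) : ℂ) ≠ 0 := by exact_mod_cast hSpos.ne'
    have huS : u * S = (‖S‖ : ℂ) := by
      rw [hu, div_mul_eq_mul_div, mul_comm, Complex.mul_conj, Complex.normSq_eq_norm_sq]
      rw [div_eq_iff hcs]
      push_cast
      ring
    have hterm : ∀ j, (u * z j).re ≤ ‖z j‖ := by
      intro j
      calc (u * z j).re ≤ ‖u * z j‖ := Complex.re_le_norm _
        _ = ‖z j‖ := by rw [norm_mul, huabs, one_mul]
    have hsum0 : ∑ j, (‖z j‖ - (u * z j).re) = 0 := by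
      have h1 : ∑ j, (u * z j).re = ‖S‖ := by
        have : ∑ j, (u * z j).re = (u * S).re := by
          rw [hS, Finset.mul_sum, Complex.re_sum]
        rw [this, huS, Complex.ofReal_re]
      rw [Finset.sum_sub_distrib, h1, habs, sub_self]
    have hall : ∀ j, (u * z j).re = ‖z j‖ := by
      intro j
      have h1 := (Finset.sum_eq_zero_iff_of_nonneg
        (fun j _ => sub_nonneg.2 (hterm j))).mp hsum0 j (Finset.mem_univ j)
      linarith [sub_eq_zero.mp h1]
    have hyu : ∀ j, u * y j = (a j : ℂ) := by
      intro j
      have habs_uz : ‖u * z j‖ = ‖z j‖ := by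
        rw [norm_mul, huabs, one_mul]
      have h1 : (u * z j).re = ‖u * z j‖ := by
        rw [habs_uz]; exact hall j
      have h2 := re_eq_abs_imp h1
      rw [h1, habs_uz] at h2
      -- h2 : u * z j = (abs (z j) : ℂ)
      have h3 : ‖z j‖ = M i0 j * a j := by
        show ‖(M i0 j : ℂ) * y j‖ = M i0 j * a j
        rw [norm_mul, Complex.norm_real, Real.norm_eq_abs, abs_of_pos (hM i0 j)]
      have h4 : u * z j = (M i0 j : ℂ) * (u * y j) := by
        show u * ((M i0 j : ℂ) * y j) = _
        ring
      have h5 : ((M i0 j : ℝ) : ℂ) ≠ 0 := by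
        exact_mod_cast (hM i0 j).ne'
      refine mul_left_cancel₀ h5 ?_
      rw [← h4, h2, h3]
      push_cast
      ring
    -- conclude μ = lam
    apply hne
    have hfinal : μ * (a i0 : ℂ) = (lam : ℂ) * (a i0 : ℂ) := by
      have h1 : u * ((A.mulVec y) i0) = ((M.mulVec a i0 : ℝ) : ℂ) := by
        have h2 : (A.mulVec y) i0 = ∑ j, (M i0 j : ℂ) * y j := rfl
        rw [h2, Finset.mul_sum]
        have h3 : ∀ j, u * ((M i0 j : ℂ) * y j) = (M i0 j : ℂ) * (a j : ℂ) := by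
          intro j
          rw [show u * ((M i0 j : ℂ) * y j) = (M i0 j : ℂ) * (u * y j) by ring, hyu j]
        rw [Finset.sum_congr rfl fun j _ => h3 j]
        exact congrFun (mulVec_map_ofReal M a) i0
      rw [hy] at h1
      have h4 : (μ • y) i0 = μ * y i0 := rfl
      rw [h4] at h1
      have h5 : u * (μ * y i0) = μ * (u * y i0) := by ring
      rw [h5, hyu i0] at h1
      rw [h1, haeq]
      have : ((lam • a) i0 : ℝ) = lam * a i0 := rfl
      rw [this]
      push_cast
      ring
    have h6 : ((a i0 : ℝ) : ℂ) ≠ 0 := by exact_mod_cast (hapos i0).ne'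
    exact mul_right_cancel₀ h6 hfinal
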